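/- arXiv:1708.08353 — 3 statements merged into one kernel-verified Lean document; each statement's English description precedes it below -/
import Mathlib

section
/- The function t ↦ log(1 − Φ(t)) is concave on ℝ, where Φ is the standard normal cumulative distribution function. -/
noncomputable def gaussPDF (t : ℝ) : ℝ := (Real.sqrt (2 * Real.pi))⁻¹ * Real.exp (-t ^ 2 / 2)

noncomputable def Phi (t : ℝ) : ℝ := ∫ u in Set.Iic t, gaussPDF u

open Real MeasureTheory Set Filter

lemma gp_pos (t : ℝ) : 0 < gaussPDF t :=
  mul_pos (inv_pos.2 (Real.sqrt_pos.2 (by positivity))) (Real.exp_pos _)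

lemma gp_cont : Continuous gaussPDF := by
  unfold gaussPDF; fun_prop

lemma gp_eq (t : ℝ) : gaussPDF t = (Real.sqrt (2 * Real.pi))⁻¹ * Real.exp (-(1/2) * t ^ 2) := by
  unfold gaussPDF; ring_nf

lemma gp_integrable : Integrable gaussPDF := by
  have h := (integrable_exp_neg_mul_sq (b := 1/2) (by norm_num)).const_mul
    (Real.sqrt (2 * Real.pi))⁻¹
  exact h.congr (Filter.Eventually.of_forall fun x => (gp_eq x).symm)

lemma gp_integral : ∫ x, gaussPDF x = 1 := by
  have h : ∫ x : ℝ, Real.exp (-(1/2) * x ^ 2) = Real.sqrt (Real.pi / (1/2)) :=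
    integral_gaussian (1/2)
  have h2 : ∫ x, gaussPDF x = (Real.sqrt (2 * Real.pi))⁻¹ * Real.sqrt (Real.pi / (1/2)) := by
    rw [← h, ← integral_const_mul]
    exact integral_congr_ae (Filter.Eventually.of_forall fun x => gp_eq x)
  rw [h2]
  have : Real.pi / (1/2) = 2 * Real.pi := by ring
  rw [this, inv_mul_cancel₀]
  exact ne_of_gt (Real.sqrt_pos.2 (by positivity))

lemma G_eq (t : ℝ) : 1 - Phi t = ∫ x in Set.Ioi t, gaussPDF x := by
  have h := intervalIntegral.integral_Iic_add_Ioi (b := t) gp_integrable.integrableOn gp_integrable.integrableOn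
  rw [gp_integral] at h
  unfold Phi; linarith

lemma G_pos (t : ℝ) : 0 < 1 - Phi t := by
  rw [G_eq]
  rw [setIntegral_pos_iff_support_of_nonneg_ae
    (Filter.Eventually.of_forall fun x => (gp_pos x).le) gp_integrable.integrableOn]
  have hsupp : Function.support gaussPDF = Set.univ :=
    Set.eq_univ_of_forall fun x => (gp_pos x).ne'
  rw [hsupp, Set.univ_inter]
  simp [Real.volume_Ioi]

lemma hasDerivAt_gp (t : ℝ) : HasDerivAt gaussPDF (-t * gaussPDF t) t := by
  have h1 : HasDerivAt (fun t : ℝ => -t ^ 2 / 2) (-t) t := by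
    have := ((hasDerivAt_pow 2 t).neg).div_const 2
    simpa using this.congr_deriv (by ring)
  have h2 := (h1.exp).const_mul (Real.sqrt (2 * Real.pi))⁻¹
  unfold gaussPDF
  exact h2.congr_deriv (by ring)

lemma hasDerivAt_Phi (t : ℝ) : HasDerivAt Phi (gaussPDF t) t := by
  have heq : Phi = fun u => (∫ x in (0:ℝ)..u, gaussPDF x) + Phi 0 := by
    funext u
    have := intervalIntegral.integral_Iic_sub_Iic (a := (0:ℝ)) (b := u) (μ := volume)
      gp_integrable.integrableOn gp_integrable.integrableOn
    unfold Phi; rw [← this]; ring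
  rw [heq]
  exact (intervalIntegral.integral_hasDerivAt_right
    gp_integrable.intervalIntegrable
    (gp_cont.stronglyMeasurable.stronglyMeasurableAtFilter)
    gp_cont.continuousAt).add_const _

lemma gp_tendsto : Tendsto gaussPDF atTop (nhds 0) := by
  have h1 : Tendsto (fun u : ℝ => -u ^ 2 / 2) atTop atBot := by
    apply Filter.Tendsto.atBot_div_const (by norm_num)
    exact tendsto_neg_atBot_iff.2 (tendsto_pow_atTop two_ne_zero)
  have h2 : Tendsto gaussPDF atTop (nhds ((Real.sqrt (2 * Real.pi))⁻¹ * 0)) := by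
    exact (Real.tendsto_exp_atBot.comp h1).const_mul _
  simpa using h2

lemma mul_gp_integrableOn (t : ℝ) : IntegrableOn (fun u => u * gaussPDF u) (Set.Ioi t) := by
  have h := ((integrable_mul_exp_neg_mul_sq (b := 1/2) (by norm_num)).const_mul
    (Real.sqrt (2 * Real.pi))⁻¹)
  have h2 : Integrable (fun u : ℝ => u * gaussPDF u) := by
    apply h.congr (Filter.Eventually.of_forall fun x => ?_)
    unfold gaussPDF; ring_nf
  exact h2.integrableOn

lemma integral_mul_gp (t : ℝ) : ∫ u in Set.Ioi t, u * gaussPDF u = gaussPDF t := by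
  have hderiv : ∀ x ∈ Set.Ioi t, HasDerivAt (fun u => -gaussPDF u) (x * gaussPDF x) x := by
    intro x _
    exact (hasDerivAt_gp x).neg.congr_deriv (by ring)
  have h := integral_Ioi_of_hasDerivAt_of_tendsto
    (gp_cont.neg.continuousWithinAt)
    hderiv (mul_gp_integrableOn t) (gp_tendsto.neg)
  rw [h]; simp

lemma key (t : ℝ) : t * (1 - Phi t) ≤ gaussPDF t := by
  rcases le_or_gt t 0 with ht | ht
  · exact le_trans (mul_nonpos_iff.2 (Or.inr ⟨ht, (G_pos t).le⟩)) (gp_pos t).le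
  · rw [G_eq, ← integral_const_mul, ← integral_mul_gp t]
    apply setIntegral_mono_on ((gp_integrable.const_mul t).integrableOn)
      (mul_gp_integrableOn t) measurableSet_Ioi
    intro x hx
    exact mul_le_mul_of_nonneg_right (le_of_lt hx) (gp_pos x).le

theorem stmt2 : ConcaveOn ℝ Set.univ (fun t : ℝ => Real.log (1 - Phi t)) := by
  set f : ℝ → ℝ := fun t => Real.log (1 - Phi t) with hf
  have hf1 : ∀ t, HasDerivAt f (-gaussPDF t / (1 - Phi t)) t := fun t =>
    ((hasDerivAt_Phi t).const_sub 1).log (G_pos t).ne'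
  have hderiv : deriv f = fun t => -gaussPDF t / (1 - Phi t) := funext fun t => (hf1 t).deriv
  have hf2 : ∀ t, HasDerivAt (deriv f)
      ((t * gaussPDF t * (1 - Phi t) - -gaussPDF t * -gaussPDF t) / (1 - Phi t) ^ 2) t := by
    intro t
    rw [hderiv]
    exact ((hasDerivAt_gp t).neg.congr_deriv (by ring)).div
      ((hasDerivAt_Phi t).const_sub 1) (G_pos t).ne'
  apply concaveOn_univ_of_deriv2_nonpos
  · exact fun t => (hf1 t).differentiableAt
  · exact fun t => (hf2 t).differentiableAt
  · intro x
    rw [show deriv^[2] f x = deriv (deriv f) x from rfl, (hf2 x).deriv]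
    apply div_nonpos_of_nonpos_of_nonneg _ (by positivity)
    nlinarith [mul_le_mul_of_nonneg_right (key x) (gp_pos x).le]
end

section
/- Let β̂, β₀ ∈ ℝ^p with ‖β₀‖₀ ≤ s, and let β̂^ν be the componentwise hard-thresholded vector β̂^ν_j = β̂_j·1{|β̂_j| ≥ ν_j} with positive thresholds ν_j. Then ‖β̂^ν‖₀ ≤ s + ‖β̂ − β₀‖₁/ν_min, where ν_min = min_j ν_j. -/
theorem stmt4 (p s : ℕ) (βh β₀ ν : Fin p → ℝ)
    (hν : ∀ j, 0 < ν j)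
    (h0 : (Finset.univ.filter fun j => β₀ j ≠ 0).card ≤ s)
    (νmin : ℝ) (hνmin : IsLeast (Set.range ν) νmin)
    (βν : Fin p → ℝ) (hβν : ∀ j, βν j = if ν j ≤ |βh j| then βh j else 0) :
    ((Finset.univ.filter fun j => βν j ≠ 0).card : ℝ) ≤ s + (∑ j, |βh j - β₀ j|) / νmin := by
  obtain ⟨j₀, hj₀⟩ := hνmin.1
  have hνpos : 0 < νmin := hj₀ ▸ hν j₀
  set S := Finset.univ.filter fun j => βν j ≠ 0 with hS
  set T := Finset.univ.filter fun j => βν j ≠ 0 ∧ β₀ j = 0 with hT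
  have hsub : S ⊆ (Finset.univ.filter fun j => β₀ j ≠ 0) ∪ T := by
    intro j hj
    simp only [hS, hT, Finset.mem_filter, Finset.mem_union, Finset.mem_univ, true_and] at *
    by_cases h : β₀ j = 0
    · exact Or.inr ⟨hj, h⟩
    · exact Or.inl h
  have hcard : (S.card : ℝ) ≤ s + T.card := by
    have := (Finset.card_le_card hsub).trans (Finset.card_union_le _ _)
    have h2 := this.trans (Nat.add_le_add_right h0 _)
    exact_mod_cast h2
  have hTsum : (T.card : ℝ) * νmin ≤ ∑ j, |βh j - β₀ j| := by
    calc (T.card : ℝ) * νmin = ∑ _j ∈ T, νmin := by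
          rw [Finset.sum_const, nsmul_eq_mul]
      _ ≤ ∑ j ∈ T, |βh j - β₀ j| := by
          apply Finset.sum_le_sum
          intro j hj
          simp only [hT, Finset.mem_filter, Finset.mem_univ, true_and] at hj
          obtain ⟨hne, h0j⟩ := hj
          rw [hβν j] at hne
          by_cases hc : ν j ≤ |βh j|
          · have : νmin ≤ ν j := hνmin.2 ⟨j, rfl⟩
            rw [h0j, sub_zero]
            linarith
          · simp [hc] at hne
      _ ≤ ∑ j, |βh j - β₀ j| := by
          apply Finset.sum_le_sum_of_subset_of_nonneg (Finset.subset_univ T)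
          intros; positivity
  have : (T.card : ℝ) ≤ (∑ j, |βh j - β₀ j|) / νmin := by
    rw [le_div_iff₀ hνpos]; exact hTsum
  linarith
end

section
/- Let β̂, β₀ ∈ ℝ^p with ‖β₀‖₀ ≤ s ≥ 1, and let β̂^ν be the hard-thresholded vector β̂^ν_j = β̂_j·1{|β̂_j| ≥ ν_j} with positive thresholds ν_j and ν_max = max_j ν_j. Then ‖β̂^ν − β₀‖₂ ≤ ‖β̂ − β₀‖₂ + 2√s·ν_max + 2‖β̂ − β₀‖₁/√s. -/
theorem stmt5 (p s : ℕ) (hs : 1 ≤ s) (βh β₀ ν : Fin p → ℝ)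
    (hν : ∀ j, 0 < ν j)
    (h0 : (Finset.univ.filter fun j => β₀ j ≠ 0).card ≤ s)
    (νmax : ℝ) (hνmax : IsGreatest (Set.range ν) νmax)
    (βν : Fin p → ℝ) (hβν : ∀ j, βν j = if ν j ≤ |βh j| then βh j else 0) :
    Real.sqrt (∑ j, (βν j - β₀ j) ^ 2) ≤
      Real.sqrt (∑ j, (βh j - β₀ j) ^ 2) + 2 * Real.sqrt s * νmax +
        2 * (∑ j, |βh j - β₀ j|) / Real.sqrt s := by
  obtain ⟨⟨j₀, hj₀⟩, hub⟩ := hνmax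
  have hνmax_pos : 0 < νmax := hj₀ ▸ hν j₀
  have hνle : ∀ j, ν j ≤ νmax := fun j => hub ⟨j, rfl⟩
  set L : ℝ := ∑ j, |βh j - β₀ j| with hL
  have hLnn : 0 ≤ L := Finset.sum_nonneg fun j _ => abs_nonneg _
  have hA : (0:ℝ) < Real.sqrt s := Real.sqrt_pos.2 (by exact_mod_cast hs)
  set A : ℝ := Real.sqrt s with hAdef
  have hA2 : A ^ 2 = (s:ℝ) := Real.sq_sqrt (by positivity)
  -- pointwise bound on (βν j - βh j)^2
  have hpt : ∀ j, (βν j - βh j) ^ 2 ≤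
      (if β₀ j ≠ 0 then νmax ^ 2 else νmax * |βh j - β₀ j|) := by
    intro j
    rw [hβν j]
    by_cases hth : ν j ≤ |βh j|
    · simp only [hth, if_true, sub_self]
      rw [zero_pow (by norm_num)]
      split <;> positivity
    · push_neg at hth
      rw [if_neg (not_le.mpr hth), zero_sub, neg_sq]
      have hb : |βh j| ≤ νmax := le_trans hth.le (hνle j)
      by_cases h0j : β₀ j ≠ 0
      · rw [if_pos h0j]
        calc (βh j) ^ 2 = |βh j| ^ 2 := (sq_abs _).symm
          _ ≤ νmax ^ 2 := by nlinarith [abs_nonneg (βh j)]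
      · push_neg at h0j
        rw [if_neg (not_not_intro h0j), h0j, sub_zero]
        calc (βh j) ^ 2 = |βh j| * |βh j| := by rw [← sq_abs]; ring
          _ ≤ νmax * |βh j| := by nlinarith [abs_nonneg (βh j)]
  -- sum bound
  have key : ∑ j, (βν j - βh j) ^ 2 ≤ (s:ℝ) * νmax ^ 2 + νmax * L := by
    calc ∑ j, (βν j - βh j) ^ 2
        ≤ ∑ j, (if β₀ j ≠ 0 then νmax ^ 2 else νmax * |βh j - β₀ j|) :=
          Finset.sum_le_sum fun j _ => hpt j
      _ ≤ ∑ j, ((if β₀ j ≠ 0 then νmax ^ 2 else 0) + νmax * |βh j - β₀ j|) := by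
          refine Finset.sum_le_sum fun j _ => ?_
          split <;> [skip; simp] <;> nlinarith [abs_nonneg (βh j - β₀ j), hνmax_pos]
      _ = (Finset.univ.filter fun j => β₀ j ≠ 0).card * νmax ^ 2 + νmax * L := by
          rw [Finset.sum_add_distrib, ← Finset.sum_filter, Finset.sum_const, nsmul_eq_mul,
            ← Finset.mul_sum]
      _ ≤ (s:ℝ) * νmax ^ 2 + νmax * L := by
          have : ((Finset.univ.filter fun j => β₀ j ≠ 0).card : ℝ) ≤ (s:ℝ) := by
            exact_mod_cast h0
          nlinarith [sq_nonneg νmax]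
  -- bound on the correction norm
  have hY : Real.sqrt (∑ j, (βν j - βh j) ^ 2) ≤ 2 * A * νmax + 2 * L / A := by
    have hb : (L / A) * A = L := div_mul_cancel₀ _ (ne_of_gt hA)
    have h2 : ∑ j, (βν j - βh j) ^ 2 ≤ (2 * A * νmax + 2 * L / A) ^ 2 := by
      refine key.trans ?_
      have hdiv : 0 ≤ L / A := div_nonneg hLnn hA.le
      have hid : A * νmax * (L / A) = νmax * L := by
        field_simp
      have e : (2 * A * νmax + 2 * L / A) ^ 2
          = 4 * ((s:ℝ) * νmax ^ 2) + 8 * (A * νmax * (L / A)) + 4 * (L / A) ^ 2 := by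
        rw [← hA2]; ring
      rw [e, hid]
      nlinarith [sq_nonneg (L / A), mul_nonneg hνmax_pos.le hLnn,
        mul_nonneg (Nat.cast_nonneg s : (0:ℝ) ≤ s) (sq_nonneg νmax)]
    calc Real.sqrt (∑ j, (βν j - βh j) ^ 2) ≤ Real.sqrt ((2 * A * νmax + 2 * L / A) ^ 2) :=
          Real.sqrt_le_sqrt h2
      _ = 2 * A * νmax + 2 * L / A := Real.sqrt_sq (by positivity)
  -- triangle inequality in Euclidean space
  have tri : Real.sqrt (∑ j, (βν j - β₀ j) ^ 2) ≤
      Real.sqrt (∑ j, (βh j - β₀ j) ^ 2) + Real.sqrt (∑ j, (βν j - βh j) ^ 2) := by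
    let X : EuclideanSpace ℝ (Fin p) := WithLp.toLp 2 (fun j => βh j - β₀ j)
    let Y : EuclideanSpace ℝ (Fin p) := WithLp.toLp 2 (fun j => βν j - βh j)
    have h := norm_add_le X Y
    simp only [EuclideanSpace.norm_eq, Real.norm_eq_abs, sq_abs, PiLp.add_apply, PiLp.toLp_apply, X, Y] at h
    have : ∀ j, (βh j - β₀ j) + (βν j - βh j) = βν j - β₀ j := fun j => by ring
    simpa [this] using h
  calc Real.sqrt (∑ j, (βν j - β₀ j) ^ 2)
      ≤ Real.sqrt (∑ j, (βh j - β₀ j) ^ 2) + Real.sqrt (∑ j, (βν j - βh j) ^ 2) := tri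
    _ ≤ Real.sqrt (∑ j, (βh j - β₀ j) ^ 2) + (2 * A * νmax + 2 * L / A) := by linarith
    _ = Real.sqrt (∑ j, (βh j - β₀ j) ^ 2) + 2 * A * νmax + 2 * L / A := by ring
end
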